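/- The order of the group of elements (τ_i, σ_i)_{0 ≤ i ≤ n-2} of (Alt_n ≀ Sym_{n+1}) × ∏_{1 ≤ i < n-1} (Sym_{n-i} ≀ Sym_{n_i}) with n_i = C(n+1, i+1), subject to: ∏_j τ_0^j ∈ Alt_n', ∏_j τ_i^j ∈ Alt_{n-i} for i > 0, and σ_i ∈ Alt_{n_i} for all i, equals (1 / (c_n · 2^{3n-2})) · ∏_{0 ≤ i < n-1} (n-i)!^{C(n+1,i+1)} · C(n+1,i+1)!, where c_n = 3 for n = 3, 4 and c_n = 1 for n ≥ 5. -/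

import Mathlib

set_option maxRecDepth 10000

section Aux

open Equiv
open scoped commutatorElement

lemma rubikAux_ofFn_comp_castSucc {G : Type*} {k : ℕ} (f : Fin k → G) (a : G) :
    (List.ofFn fun i : Fin k => (Fin.snoc f a : Fin (k+1) → G) i.castSucc) = List.ofFn f := by
  congr 1; funext i; rw [Fin.snoc_castSucc]

lemma rubikAux_prod_ofFn_snoc {G : Type*} [Monoid G] {k : ℕ} (f : Fin k → G) (a : G) :
    (List.ofFn (Fin.snoc f a : Fin (k+1) → G)).prod = (List.ofFn f).prod * a := by
  rw [List.ofFn_succ', List.prod_concat, Fin.snoc_last, rubikAux_ofFn_comp_castSucc]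

lemma rubikAux_card_tuple_prod_mem {G : Type*} [Group G] (H : Subgroup G) (k : ℕ) (hk : k ≠ 0) :
    Nat.card {τ : Fin k → G // (List.ofFn τ).prod ∈ H}
      = Nat.card G ^ (k - 1) * Nat.card H := by
  obtain ⟨k, rfl⟩ := Nat.exists_eq_succ_of_ne_zero hk
  have e : {τ : Fin (k+1) → G // (List.ofFn τ).prod ∈ H} ≃ (Fin k → G) × H :=
    { toFun := fun τ => (fun i => τ.1 i.castSucc, ⟨(List.ofFn τ.1).prod, τ.2⟩)
      invFun := fun p => ⟨Fin.snoc p.1 ((List.ofFn p.1).prod⁻¹ * p.2.1), by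
        rw [rubikAux_prod_ofFn_snoc, mul_inv_cancel_left]; exact p.2.2⟩
      left_inv := fun τ => Subtype.ext (by
        show Fin.snoc (fun i => τ.1 i.castSucc)
          ((List.ofFn fun i => τ.1 i.castSucc).prod⁻¹ * (List.ofFn τ.1).prod) = τ.1
        funext i
        refine Fin.lastCases ?_ (fun j => ?_) i
        · rw [Fin.snoc_last, List.ofFn_succ' τ.1, List.prod_concat, inv_mul_cancel_left]
        · rw [Fin.snoc_castSucc])
      right_inv := fun p => Prod.ext
        (funext fun i => by
          show (Fin.snoc p.1 _ : Fin (k+1) → G) i.castSucc = p.1 i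
          rw [Fin.snoc_castSucc])
        (Subtype.ext (by
          show (List.ofFn (Fin.snoc p.1 ((List.ofFn p.1).prod⁻¹ * p.2.1) : Fin (k+1) → G)).prod
            = p.2.1
          rw [rubikAux_prod_ofFn_snoc, mul_inv_cancel_left])) }
  rw [Nat.card_congr e, Nat.card_prod, Nat.card_pi]
  simp

lemma rubikAux_two_mul_card_alt (m : ℕ) (hm : 2 ≤ m) :
    2 * Nat.card (alternatingGroup (Fin m)) = m.factorial := by
  haveI : Nontrivial (Fin m) :=
    ⟨⟨⟨0, by omega⟩, ⟨1, by omega⟩, by simp [Fin.ext_iff]⟩⟩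
  rw [Nat.card_eq_fintype_card, two_mul_card_alternatingGroup, Fintype.card_perm,
    Fintype.card_fin]

lemma rubikAux_card_perm_fin (m : ℕ) :
    Nat.card (Equiv.Perm (Fin m)) = m.factorial := by
  rw [Nat.card_eq_fintype_card, Fintype.card_perm, Fintype.card_fin]

/-- the Klein four group inside `A₄`. -/
def rubikAuxV4 : Subgroup (alternatingGroup (Fin 4)) where
  carrier := {x | x ^ 2 = 1}
  one_mem' := by simp only [Set.mem_setOf_eq]; decide
  mul_mem' := by intro a b ha hb; simp only [Set.mem_setOf_eq] at *; revert a b; decide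
  inv_mem' := by intro a ha; simp only [Set.mem_setOf_eq] at *; revert a; decide

instance : DecidablePred (· ∈ rubikAuxV4) := fun x => inferInstanceAs (Decidable (x ^ 2 = 1))

lemma rubikAux_commutator_A4 : commutator (alternatingGroup (Fin 4)) = rubikAuxV4 := by
  apply le_antisymm
  · rw [commutator_def, Subgroup.commutator_le]
    intro g hg h hh
    show ⁅g, h⁆ ^ 2 = 1
    clear hg hh; revert g h; decide
  · intro x hx
    have hx2 : x ^ 2 = 1 := hx
    have : ∃ g h : alternatingGroup (Fin 4), ⁅g, h⁆ = x := by revert hx2; revert x; decide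
    obtain ⟨g, h, rfl⟩ := this
    rw [commutator_def]
    exact Subgroup.commutator_mem_commutator (Subgroup.mem_top _) (Subgroup.mem_top _)

lemma rubikAux_commutator_A3 : commutator (alternatingGroup (Fin 3)) = ⊥ := by
  rw [eq_bot_iff, commutator_def, Subgroup.commutator_le]
  intro g hg h hh
  rw [Subgroup.mem_bot]
  clear hg hh; revert g h; decide

lemma rubikAux_key_swaps {β : Type*} [DecidableEq β] {a b c d e : β}
    (hab : a ≠ b) (hac : a ≠ c) (had : a ≠ d) (hae : a ≠ e) (hbc : b ≠ c) (hbd : b ≠ d)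
    (hbe : b ≠ e) (hcd : c ≠ d) (hce : c ≠ e) (hde : d ≠ e) :
    ⁅Equiv.swap a b * Equiv.swap a d, Equiv.swap a c * Equiv.swap a e⁆
      = Equiv.swap a e * Equiv.swap a d := by
  have h1 := hab.symm; have h2 := hac.symm; have h3 := had.symm; have h4 := hae.symm
  have h5 := hbc.symm; have h6 := hbd.symm; have h7 := hbe.symm; have h8 := hcd.symm
  have h9 := hce.symm; have h10 := hde.symm
  ext v
  simp only [commutatorElement_def, mul_inv_rev, Equiv.swap_inv, Equiv.Perm.mul_apply]
  by_cases hva : v = a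
  · subst hva
    simp [Equiv.swap_apply_left, Equiv.swap_apply_right, Equiv.swap_apply_of_ne_of_ne, *]
  by_cases hvb : v = b
  · subst hvb
    simp [Equiv.swap_apply_left, Equiv.swap_apply_right, Equiv.swap_apply_of_ne_of_ne, *]
  by_cases hvc : v = c
  · subst hvc
    simp [Equiv.swap_apply_left, Equiv.swap_apply_right, Equiv.swap_apply_of_ne_of_ne, *]
  by_cases hvd : v = d
  · subst hvd
    simp [Equiv.swap_apply_left, Equiv.swap_apply_right, Equiv.swap_apply_of_ne_of_ne, *]
  by_cases hve : v = e
  · subst hve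
    simp [Equiv.swap_apply_left, Equiv.swap_apply_right, Equiv.swap_apply_of_ne_of_ne, *]
  · simp [Equiv.swap_apply_of_ne_of_ne, *]

lemma rubikAux_commutator_alt_eq_top (n : ℕ) (hn : 5 ≤ n) :
    commutator (alternatingGroup (Fin n)) = ⊤ := by
  set a : Fin n := ⟨0, by omega⟩
  set b : Fin n := ⟨1, by omega⟩
  set c : Fin n := ⟨2, by omega⟩
  set d : Fin n := ⟨3, by omega⟩
  set e : Fin n := ⟨4, by omega⟩
  have hab : a ≠ b := Fin.ne_of_val_ne (by norm_num)
  have hac : a ≠ c := Fin.ne_of_val_ne (by norm_num)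
  have had : a ≠ d := Fin.ne_of_val_ne (by norm_num)
  have hae : a ≠ e := Fin.ne_of_val_ne (by norm_num)
  have hbc : b ≠ c := Fin.ne_of_val_ne (by norm_num)
  have hbd : b ≠ d := Fin.ne_of_val_ne (by norm_num)
  have hbe : b ≠ e := Fin.ne_of_val_ne (by norm_num)
  have hcd : c ≠ d := Fin.ne_of_val_ne (by norm_num)
  have hce : c ≠ e := Fin.ne_of_val_ne (by norm_num)
  have hde : d ≠ e := Fin.ne_of_val_ne (by norm_num)
  have hf : Equiv.Perm.IsThreeCycle (Equiv.swap a e * Equiv.swap a d) :=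
    Equiv.Perm.isThreeCycle_swap_mul_swap_same hae had (Ne.symm hde)
  have hx : Equiv.swap a b * Equiv.swap a d ∈ alternatingGroup (Fin n) := by
    simp [Equiv.Perm.mem_alternatingGroup, Equiv.Perm.sign_swap, hab, had]
  have hy : Equiv.swap a c * Equiv.swap a e ∈ alternatingGroup (Fin n) := by
    simp [Equiv.Perm.mem_alternatingGroup, Equiv.Perm.sign_swap, hac, hae]
  set F : alternatingGroup (Fin n) := ⟨_, hf.mem_alternatingGroup⟩
  have hFmem : F ∈ commutator (alternatingGroup (Fin n)) := by
    have : F = ⁅(⟨_, hx⟩ : alternatingGroup (Fin n)), (⟨_, hy⟩ : alternatingGroup (Fin n))⁆ := by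
      apply Subtype.ext
      simp only [commutatorElement_def, Subgroup.coe_mul, InvMemClass.coe_inv]
      rw [← commutatorElement_def]
      exact (rubikAux_key_swaps hab hac had hae hbc hbd hbe hcd hce hde).symm
    rw [this, commutator_def]
    exact Subgroup.commutator_mem_commutator (Subgroup.mem_top _) (Subgroup.mem_top _)
  have hclos := hf.alternating_normalClosure (by simpa using hn)
  rw [eq_top_iff, ← hclos]
  exact Subgroup.normalClosure_le_normal (by simpa using hFmem)

lemma rubikAux_card_commutator_mul (n : ℕ) (hn : 3 ≤ n) :
    Nat.card (commutator (alternatingGroup (Fin n))) * (if n ≤ 4 then 3 else 1)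
      = Nat.card (alternatingGroup (Fin n)) := by
  rcases Nat.lt_or_ge n 5 with h | h
  · interval_cases n
    · rw [rubikAux_commutator_A3, if_pos (by norm_num), Subgroup.card_bot,
        Nat.card_eq_fintype_card]
      decide
    · rw [rubikAux_commutator_A4, if_pos (by norm_num), Nat.card_eq_fintype_card,
        Nat.card_eq_fintype_card]
      decide
  · rw [rubikAux_commutator_alt_eq_top n h, if_neg (by omega), mul_one, Subgroup.card_top]

end Aux

/-- The order of the Rubik's group of the `n`-dimensional simplex: the group of tuples
`(τ_i, σ_i)_{0 ≤ i ≤ n-2}` in `(Alt_n ≀ Sym_{n+1}) × ∏_{1 ≤ i < n-1} Sym_{n-i} ≀ Sym_{n_i}`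
(with `n_i = C(n+1, i+1)`) satisfying `∏_j τ_0^j ∈ Alt_n'`, `∏_j τ_i^j ∈ Alt_{n-i}` for
`i > 0`, and `σ_i ∈ Alt_{n_i}` for all `i`, has cardinality
`(1 / (c_n · 2^(3n-2))) · ∏_{0 ≤ i < n-1} (n-i)!^{C(n+1,i+1)} · C(n+1,i+1)!`,
where `c_n = 3` for `n = 3, 4` and `c_n = 1` for `n ≥ 5`. -/
theorem card_rubik_simplex_group (n : ℕ) (hn : 3 ≤ n) :
    Nat.card {x :
        ((Fin (n + 1) → alternatingGroup (Fin n)) × Equiv.Perm (Fin (n + 1))) ×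
        (∀ i : Fin (n - 2),
          (Fin ((n + 1).choose (i.1 + 2)) → Equiv.Perm (Fin (n - (i.1 + 1)))) ×
            Equiv.Perm (Fin ((n + 1).choose (i.1 + 2)))) //
        (List.ofFn x.1.1).prod ∈ commutator (alternatingGroup (Fin n)) ∧
        x.1.2 ∈ alternatingGroup (Fin (n + 1)) ∧
        ∀ i : Fin (n - 2),
          (List.ofFn (x.2 i).1).prod ∈ alternatingGroup (Fin (n - (i.1 + 1))) ∧
          (x.2 i).2 ∈ alternatingGroup (Fin ((n + 1).choose (i.1 + 2)))} *
      ((if n ≤ 4 then 3 else 1) * 2 ^ (3 * n - 2)) =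
    ∏ i ∈ Finset.range (n - 1),
      ((n - i).factorial ^ ((n + 1).choose (i + 1)) * ((n + 1).choose (i + 1)).factorial) := by
  -- the decomposition equivalence
  have E : {x :
        ((Fin (n + 1) → alternatingGroup (Fin n)) × Equiv.Perm (Fin (n + 1))) ×
        (∀ i : Fin (n - 2),
          (Fin ((n + 1).choose (i.1 + 2)) → Equiv.Perm (Fin (n - (i.1 + 1)))) ×
            Equiv.Perm (Fin ((n + 1).choose (i.1 + 2)))) //
        (List.ofFn x.1.1).prod ∈ commutator (alternatingGroup (Fin n)) ∧
        x.1.2 ∈ alternatingGroup (Fin (n + 1)) ∧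
        ∀ i : Fin (n - 2),
          (List.ofFn (x.2 i).1).prod ∈ alternatingGroup (Fin (n - (i.1 + 1))) ∧
          (x.2 i).2 ∈ alternatingGroup (Fin ((n + 1).choose (i.1 + 2)))} ≃
      ({τ : Fin (n + 1) → alternatingGroup (Fin n) // (List.ofFn τ).prod ∈ commutator (alternatingGroup (Fin n))} ×
        {σ : Equiv.Perm (Fin (n + 1)) // σ ∈ alternatingGroup (Fin (n + 1))}) ×
      (∀ i : Fin (n - 2),
        {t : Fin ((n + 1).choose (i.1 + 2)) → Equiv.Perm (Fin (n - (i.1 + 1))) //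
            (List.ofFn t).prod ∈ alternatingGroup (Fin (n - (i.1 + 1)))} ×
        {s : Equiv.Perm (Fin ((n + 1).choose (i.1 + 2))) //
            s ∈ alternatingGroup (Fin ((n + 1).choose (i.1 + 2)))}) :=
    { toFun := fun x => ((⟨x.1.1.1, x.2.1⟩, ⟨x.1.1.2, x.2.2.1⟩),
        fun i => (⟨(x.1.2 i).1, (x.2.2.2 i).1⟩, ⟨(x.1.2 i).2, (x.2.2.2 i).2⟩))
      invFun := fun y => ⟨((y.1.1.1, y.1.2.1), fun i => ((y.2 i).1.1, (y.2 i).2.1)),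
        y.1.1.2, y.1.2.2, fun i => ⟨(y.2 i).1.2, (y.2 i).2.2⟩⟩
      left_inv := fun x => rfl
      right_inv := fun y => rfl }
  rw [Nat.card_congr E, Nat.card_prod, Nat.card_prod, Nat.card_pi]
  simp only [Nat.card_prod]
  -- the σ₀ part
  have hσ0 : Nat.card {σ : Equiv.Perm (Fin (n + 1)) // σ ∈ alternatingGroup (Fin (n + 1))}
      = Nat.card (alternatingGroup (Fin (n + 1))) := rfl
  -- the τ₀ part
  have hτ0 : Nat.card {τ : Fin (n + 1) → alternatingGroup (Fin n) // (List.ofFn τ).prod ∈ commutator (alternatingGroup (Fin n))}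
      = Nat.card (alternatingGroup (Fin n)) ^ n * Nat.card (commutator (alternatingGroup (Fin n))) := by
    rw [rubikAux_card_tuple_prod_mem _ (n + 1) (by omega), Nat.add_sub_cancel]
  rw [hσ0, hτ0]
  -- the indexed parts
  have hprod : (∏ i : Fin (n - 2),
      (Nat.card {t : Fin ((n + 1).choose (i.1 + 2)) → Equiv.Perm (Fin (n - (i.1 + 1))) //
          (List.ofFn t).prod ∈ alternatingGroup (Fin (n - (i.1 + 1)))} *
        Nat.card {s : Equiv.Perm (Fin ((n + 1).choose (i.1 + 2))) //
          s ∈ alternatingGroup (Fin ((n + 1).choose (i.1 + 2)))}))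
      = ∏ j ∈ Finset.range (n - 2),
          ((n - (j + 1)).factorial ^ ((n + 1).choose (j + 2) - 1) *
            Nat.card (alternatingGroup (Fin (n - (j + 1)))) *
            Nat.card (alternatingGroup (Fin ((n + 1).choose (j + 2))))) := by
    rw [Fin.prod_univ_eq_prod_range (fun j =>
      (Nat.card {t : Fin ((n + 1).choose (j + 2)) → Equiv.Perm (Fin (n - (j + 1))) //
          (List.ofFn t).prod ∈ alternatingGroup (Fin (n - (j + 1)))} *
        Nat.card {s : Equiv.Perm (Fin ((n + 1).choose (j + 2))) //
          s ∈ alternatingGroup (Fin ((n + 1).choose (j + 2)))})) (n - 2)]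
    refine Finset.prod_congr rfl fun j hj => ?_
    have hC : 2 ≤ (n + 1).choose (j + 2) := by
      have h1 : (j + 3).choose (j + 2) ≤ (n + 1).choose (j + 2) :=
        Nat.choose_le_choose (j + 2) (by simp at hj; omega)
      rw [Nat.choose_succ_self_right] at h1
      omega
    rw [rubikAux_card_tuple_prod_mem _ _ (by omega), rubikAux_card_perm_fin]
  rw [hprod]
  -- numerical facts
  have hAcard : 2 * Nat.card (alternatingGroup (Fin n)) = n.factorial := rubikAux_two_mul_card_alt n (by omega)
  have hA1card : 2 * Nat.card (alternatingGroup (Fin (n + 1))) = (n + 1).factorial :=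
    rubikAux_two_mul_card_alt (n + 1) (by omega)
  have hcomm := rubikAux_card_commutator_mul n hn
  -- rewrite the RHS
  rw [show n - 1 = (n - 2) + 1 by omega, Finset.prod_range_succ']
  have hf0 : (n - 0).factorial ^ ((n + 1).choose (0 + 1)) * ((n + 1).choose (0 + 1)).factorial
      = n.factorial ^ (n + 1) * (n + 1).factorial := by
    norm_num [Nat.choose_one_right]
  rw [hf0]
  -- move everything into a single product comparison
  have hpow2 : (2 : ℕ) ^ (3 * n - 2) = 2 ^ (n + 1) * 2 * 4 ^ (n - 2) := by
    have h4 : (2 : ℕ) ^ (n + 1) * 2 * 4 ^ (n - 2) = 2 ^ (n + 1) * 2 ^ 1 * (2 ^ 2) ^ (n - 2) := by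
      norm_num
    rw [h4, ← pow_mul, ← pow_add, ← pow_add]
    congr 1
    omega
  have h4prod : (4 : ℕ) ^ (n - 2) = ∏ _j ∈ Finset.range (n - 2), 4 := by
    rw [Finset.prod_const, Finset.card_range]
  have hterm : ∀ j ∈ Finset.range (n - 2),
      ((n - (j + 1)).factorial ^ ((n + 1).choose (j + 2) - 1) *
          Nat.card (alternatingGroup (Fin (n - (j + 1)))) *
          Nat.card (alternatingGroup (Fin ((n + 1).choose (j + 2))))) * 4
        = (n - (j + 1)).factorial ^ ((n + 1).choose (j + 1 + 1)) *
            ((n + 1).choose (j + 1 + 1)).factorial := by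
    intro j hj
    simp only [Finset.mem_range] at hj
    have hC : 2 ≤ (n + 1).choose (j + 2) := by
      have h1 : (j + 3).choose (j + 2) ≤ (n + 1).choose (j + 2) :=
        Nat.choose_le_choose (j + 2) (by omega)
      rw [Nat.choose_succ_self_right] at h1
      omega
    have hm : 2 ≤ n - (j + 1) := by omega
    have hα := rubikAux_two_mul_card_alt (n - (j + 1)) hm
    have hγ := rubikAux_two_mul_card_alt ((n + 1).choose (j + 2)) hC
    have hj2 : j + 1 + 1 = j + 2 := rfl
    rw [hj2]
    calc ((n - (j + 1)).factorial ^ ((n + 1).choose (j + 2) - 1) *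
          Nat.card (alternatingGroup (Fin (n - (j + 1)))) *
          Nat.card (alternatingGroup (Fin ((n + 1).choose (j + 2))))) * 4
        = (n - (j + 1)).factorial ^ ((n + 1).choose (j + 2) - 1) *
            (2 * Nat.card (alternatingGroup (Fin (n - (j + 1))))) *
            (2 * Nat.card (alternatingGroup (Fin ((n + 1).choose (j + 2))))) := by ring
      _ = (n - (j + 1)).factorial ^ ((n + 1).choose (j + 2) - 1) * (n - (j + 1)).factorial *
            ((n + 1).choose (j + 2)).factorial := by rw [hα, hγ]
      _ = (n - (j + 1)).factorial ^ ((n + 1).choose (j + 2)) *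
            ((n + 1).choose (j + 2)).factorial := by
          rw [← pow_succ]
          congr 2
          omega
  -- final computation
  calc Nat.card (alternatingGroup (Fin n)) ^ n * Nat.card (commutator (alternatingGroup (Fin n))) * Nat.card (alternatingGroup (Fin (n + 1))) *
        (∏ j ∈ Finset.range (n - 2),
          ((n - (j + 1)).factorial ^ ((n + 1).choose (j + 2) - 1) *
            Nat.card (alternatingGroup (Fin (n - (j + 1)))) *
            Nat.card (alternatingGroup (Fin ((n + 1).choose (j + 2)))))) *
        ((if n ≤ 4 then 3 else 1) * 2 ^ (3 * n - 2))
      = (Nat.card (alternatingGroup (Fin n)) ^ n * (Nat.card (commutator (alternatingGroup (Fin n))) * (if n ≤ 4 then 3 else 1)) * 2 ^ (n + 1)) *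
          (Nat.card (alternatingGroup (Fin (n + 1))) * 2) *
          ((∏ j ∈ Finset.range (n - 2),
            ((n - (j + 1)).factorial ^ ((n + 1).choose (j + 2) - 1) *
              Nat.card (alternatingGroup (Fin (n - (j + 1)))) *
              Nat.card (alternatingGroup (Fin ((n + 1).choose (j + 2)))))) * 4 ^ (n - 2)) := by
        rw [hpow2]; ring
    _ = (Nat.card (alternatingGroup (Fin n)) ^ n * Nat.card (alternatingGroup (Fin n)) * 2 ^ (n + 1)) * (n + 1).factorial *
          (∏ j ∈ Finset.range (n - 2),
            (((n - (j + 1)).factorial ^ ((n + 1).choose (j + 2) - 1) *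
              Nat.card (alternatingGroup (Fin (n - (j + 1)))) *
              Nat.card (alternatingGroup (Fin ((n + 1).choose (j + 2))))) * 4)) := by
        rw [hcomm, h4prod, ← Finset.prod_mul_distrib, mul_comm
          (Nat.card (alternatingGroup (Fin (n + 1)))) 2, hA1card]
    _ = n.factorial ^ (n + 1) * (n + 1).factorial *
          ∏ j ∈ Finset.range (n - 2),
            ((n - (j + 1)).factorial ^ ((n + 1).choose (j + 1 + 1)) *
              ((n + 1).choose (j + 1 + 1)).factorial) := by
        rw [Finset.prod_congr rfl hterm]
        congr 2
        rw [← hAcard]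
        ring
    _ = (∏ j ∈ Finset.range (n - 2),
            ((n - (j + 1)).factorial ^ ((n + 1).choose (j + 1 + 1)) *
              ((n + 1).choose (j + 1 + 1)).factorial)) *
          (n.factorial ^ (n + 1) * (n + 1).factorial) := by ring
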